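/- Let V be a complex vector space with basis (|k⟩)_{k∈ℕ} and P linear with P|k⟩ = a_{k+1}|k+1⟩ + b_k|k⟩ + c_k|k−1⟩ where all a_k ≠ 0. Equip Vⁿ with the standard M_n(ℂ)-module structure and the basis e_k = (|nk⟩,…,|nk+n−1⟩). Then the operator Pⁿ (acting componentwise) acts block-tridiagonally: Pⁿ·e_k = C_{k+1} e_{k+1} + B_k e_k + A_k e_{k−1} for matrices A_k, B_k, C_{k+1} ∈ M_n(ℂ), where A_k is upper triangular with j-th diagonal entry ∏_{i=0}^{n−1} c_{nk+j−1−i} (1 ≤ j ≤ n); in particular if all c_k ≠ 0 for the relevant indices then A_k is invertible. -/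

import Mathlib

open Matrix

/-- The standard action of `n × n` matrices on `Vⁿ`:
`A • (v₁,…,vₙ) = (Σₖ a_{1k}vₖ, …, Σₖ a_{nk}vₖ)`. -/
noncomputable instance matrixSMul {n : ℕ} {V : Type*} [AddCommGroup V] [Module ℂ V] :
    SMul (Matrix (Fin n) (Fin n) ℂ) (Fin n → V) :=
  ⟨fun A v i => ∑ k, A i k • v k⟩

theorem matrixSMul_apply {n : ℕ} {V : Type*} [AddCommGroup V] [Module ℂ V]
    (A : Matrix (Fin n) (Fin n) ℂ) (v : Fin n → V) (i : Fin n) :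
    (A • v) i = ∑ k, A i k • v k := rfl

/-- `Vⁿ` is a left module over `M_n(ℂ)` for the standard action. -/
noncomputable instance matrixModule {n : ℕ} {V : Type*} [AddCommGroup V] [Module ℂ V] :
    Module (Matrix (Fin n) (Fin n) ℂ) (Fin n → V) where
  one_smul v := funext fun i => by
    simp [matrixSMul_apply, Matrix.one_apply, ite_smul]
  mul_smul A B v := funext fun i => by
    simp only [matrixSMul_apply, Matrix.mul_apply, Finset.sum_smul, Finset.smul_sum, smul_smul]
    exact Finset.sum_comm
  smul_zero A := funext fun i => by simp [matrixSMul_apply]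
  smul_add A u v := funext fun i => by
    simp [matrixSMul_apply, smul_add, Finset.sum_add_distrib]
  add_smul A B v := funext fun i => by
    simp [matrixSMul_apply, Matrix.add_apply, add_smul, Finset.sum_add_distrib]
  zero_smul v := funext fun i => by simp [matrixSMul_apply]

/-- Let `P` act tridiagonally on a basis `(|k⟩)_{k∈ℕ}` of `V`, with all `a_k ≠ 0`, and equip
`Vⁿ` with the standard `M_n(ℂ)`-module structure and the `M_n(ℂ)`-basis
`e_k = (|nk⟩, …, |nk+n−1⟩)`.  Then `Pⁿ` (acting componentwise) acts block-tridiagonally: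
`Pⁿ·e_k = C_{k+1} e_{k+1} + B_k e_k + A_k e_{k−1}` with `A_k` upper triangular whose `j`-th
diagonal entry is `∏_{i=0}^{n−1} c_{nk+j−1−i}` (here `j` is 0-indexed, so the entry at
`(j,j)` is `∏_{i=0}^{n−1} c_{nk+j−i}`); in particular `A_k` is invertible whenever the
relevant `c`'s are nonzero. -/
theorem power_block_tridiagonal {n : ℕ} (hn : 0 < n) {V : Type*} [AddCommGroup V]
    [Module ℂ V] (b : Module.Basis ℕ ℂ V) (P : Module.End ℂ V) (a bd c : ℕ → ℂ)
    (ha : ∀ k : ℕ, a k ≠ 0)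
    (hP0 : P (b 0) = a 1 • b 1 + bd 0 • b 0)
    (hPs : ∀ k : ℕ, P (b (k + 1)) =
      a (k + 2) • b (k + 2) + bd (k + 1) • b (k + 1) + c (k + 1) • b k)
    (e : ℕ → Fin n → V) (he : ∀ (k : ℕ) (j : Fin n), e k j = b (n * k + j)) :
    ∃ A B C : ℕ → Matrix (Fin n) (Fin n) ℂ,
      ((fun i => (P ^ n) (e 0 i)) = C 1 • e 1 + B 0 • e 0) ∧
      (∀ k : ℕ, (fun i => (P ^ n) (e (k + 1) i)) =
        C (k + 2) • e (k + 2) + B (k + 1) • e (k + 1) + A (k + 1) • e k) ∧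
      (∀ (k : ℕ) (i j : Fin n), j < i → A (k + 1) i j = 0) ∧
      (∀ (k : ℕ) (j : Fin n),
        A (k + 1) j j = ∏ i ∈ Finset.range n, c (n * (k + 1) + j - i)) ∧
      ((∀ m : ℕ, 1 ≤ m → c m ≠ 0) → ∀ k : ℕ, IsUnit (A (k + 1))) := by
  
  classical
  -- extended `c` coefficient (0 at index 0) for a uniform step formula
  set c' : ℕ → ℂ := fun m => if m = 0 then 0 else c m with hc'def
  have Pstep : ∀ m : ℕ, P (b m) = a (m+1) • b (m+1) + bd m • b m + c' m • b (m-1) := by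
    intro m
    cases m with
    | zero => simp [hc'def, hP0]
    | succ m => simpa [hc'def] using hPs m
  -- support bound for iterates of P
  have key : ∀ N m ℓ : ℕ, (ℓ + N < m ∨ m + N < ℓ) → b.repr ((P ^ N) (b m)) ℓ = 0 := by
    intro N
    induction N with
    | zero =>
      intro m ℓ h
      have hne : m ≠ ℓ := by omega
      simp [Finsupp.single_apply, hne]
    | succ N ih =>
      intro m ℓ h
      have h1 := ih (m+1) ℓ (by omega)
      have h2 := ih m ℓ (by omega)
      have h3 := ih (m-1) ℓ (by omega)
      rw [pow_succ, Module.End.mul_apply, Pstep m]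
      simp only [_root_.map_add, _root_.map_smul, Finsupp.coe_add, Finsupp.coe_smul,
        Pi.add_apply, Pi.smul_apply, smul_eq_mul, h1, h2, h3]
      ring
  -- lowest coefficient of iterates
  have diag : ∀ N m : ℕ, N ≤ m →
      b.repr ((P ^ N) (b m)) (m - N) = ∏ i ∈ Finset.range N, c (m - i) := by
    intro N
    induction N with
    | zero => intro m _; simp [Finsupp.single_apply]
    | succ N ih =>
      intro m hm
      have h1 : b.repr ((P ^ N) (b (m+1))) (m - (N+1)) = 0 := key N (m+1) _ (by omega)
      have h2 : b.repr ((P ^ N) (b m)) (m - (N+1)) = 0 := key N m _ (by omega)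
      have h3 := ih (m-1) (by omega)
      have hm1 : (m-1) - N = m - (N+1) := by omega
      rw [hm1] at h3
      have hcm : c' m = c m := by simp [hc'def]; omega
      rw [pow_succ, Module.End.mul_apply, Pstep m]
      simp only [_root_.map_add, _root_.map_smul, Finsupp.coe_add, Finsupp.coe_smul,
        Pi.add_apply, Pi.smul_apply, smul_eq_mul, h1, h2, h3, hcm, mul_zero, zero_add]
      rw [Finset.prod_range_succ']
      have : ∀ i ∈ Finset.range N, c (m - 1 - i) = c (m - (i+1)) := by
        intro i _; congr 1; omega
      rw [Finset.prod_congr rfl this]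
      simp [mul_comm]
  -- general expansion over a window of basis vectors
  have expand : ∀ (x : V) (lo hi : ℕ), (∀ ℓ : ℕ, b.repr x ℓ ≠ 0 → ℓ ∈ Finset.Ico lo hi) →
      x = ∑ ℓ ∈ Finset.Ico lo hi, b.repr x ℓ • b ℓ := by
    intro x lo hi hsupp
    have hsub : (b.repr x).support ⊆ Finset.Ico lo hi := by
      intro ℓ hℓ; exact hsupp ℓ (Finsupp.mem_support_iff.mp hℓ)
    calc x = Finsupp.linearCombination ℂ b (b.repr x) := (b.linearCombination_repr x).symm
      _ = (b.repr x).sum fun ℓ r => r • b ℓ := by rw [Finsupp.linearCombination_apply]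
      _ = ∑ ℓ ∈ Finset.Ico lo hi, b.repr x ℓ • b ℓ :=
          Finsupp.sum_of_support_subset _ hsub _ (by intros; simp)
  -- translate an Ico-sum of length n into a Fin n sum
  have toFin : ∀ (f : ℕ → V) (lo : ℕ),
      ∑ ℓ ∈ Finset.Ico lo (lo + n), f ℓ = ∑ j : Fin n, f (lo + j) := by
    intro f lo
    rw [Finset.sum_Ico_eq_sum_range, Fin.sum_univ_eq_sum_range (fun j => f (lo + j)) n]
    simp
  refine ⟨fun k => Matrix.of fun i j => b.repr ((P ^ n) (b (n*k + i))) (n*(k-1) + j),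
    fun k => Matrix.of fun i j => b.repr ((P ^ n) (b (n*k + i))) (n*k + j),
    fun k => Matrix.of fun i j => b.repr ((P ^ n) (b (n*(k-1) + i))) (n*k + j),
    ?_, ?_, ?_, ?_, ?_⟩
  · -- k = 0 case
    funext i
    have hx := expand ((P ^ n) (b (n*0 + i))) (n*0) (n*0 + n + n) ?_
    · have h2 : n*0 + n = n*1 := by ring
      rw [he 0 i, hx, ← Finset.sum_Ico_consecutive _ (by omega : n*0 ≤ n*0 + n)
        (by omega : n*0 + n ≤ n*0 + n + n), toFin, toFin, h2]
      simp only [Pi.add_apply, matrixSMul_apply, Matrix.of_apply, he, Nat.add_sub_cancel,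
        Nat.sub_self]
      abel
    · intro ℓ hℓ
      have h1 : ¬ (ℓ + n < n*0 + i ∨ n*0 + i + n < ℓ) := fun h => hℓ (key n _ ℓ h)
      simp only [Finset.mem_Ico]
      have := i.isLt
      have e0 : n*0 = 0 := by ring
      have e1 : n*1 = n := by ring
      omega
  · -- k + 1 case
    intro k
    funext i
    have hx := expand ((P ^ n) (b (n*(k+1) + i))) (n*k) (n*k + n + n + n) ?_
    · have h2 : n*k + n = n*(k+1) := by ring
      have h3 : n*k + n + n = n*(k+2) := by ring
      rw [he (k+1) i, hx,
        ← Finset.sum_Ico_consecutive _ (by omega : n*k ≤ n*k + n)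
          (by omega : n*k + n ≤ n*k + n + n + n),
        ← Finset.sum_Ico_consecutive _ (by omega : n*k + n ≤ n*k + n + n)
          (by omega : n*k + n + n ≤ n*k + n + n + n),
        toFin, toFin, toFin, h3, h2]
      simp only [Pi.add_apply, matrixSMul_apply, Matrix.of_apply, he, Nat.add_sub_cancel]
      abel
    · intro ℓ hℓ
      have h1 : ¬ (ℓ + n < n*(k+1) + i ∨ n*(k+1) + i + n < ℓ) := fun h => hℓ (key n _ ℓ h)
      simp only [Finset.mem_Ico]
      have := i.isLt
      have e1 : n*(k+1) = n*k + n := by ring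
      omega
  · -- upper triangular
    intro k i j hji
    simp only [Matrix.of_apply]
    exact key n _ _ (by
      have := i.isLt; have := j.isLt
      have hji' : (j:ℕ) < i := hji
      have e1 : n*(k+1) = n*((k+1)-1) + n := by
        rw [Nat.add_sub_cancel]; ring
      left; omega)
  · -- diagonal entries
    intro k j
    simp only [Matrix.of_apply, Nat.add_sub_cancel]
    have hj := j.isLt
    have e1 : n*(k+1) = n*k + n := by ring
    have h1 : n*k + (j:ℕ) = n*(k+1) + j - n := by omega
    rw [h1, diag n _ (by omega)]
  · -- invertibility
    intro hc k
    rw [Matrix.isUnit_iff_isUnit_det, Matrix.det_of_upperTriangular]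
    · apply isUnit_iff_ne_zero.mpr
      apply Finset.prod_ne_zero_iff.mpr
      intro j _
      simp only [Matrix.of_apply, Nat.add_sub_cancel]
      have hj := j.isLt
      have e1 : n*(k+1) = n*k + n := by ring
      have h1 : n*k + (j:ℕ) = n*(k+1) + j - n := by omega
      rw [h1, diag n _ (by omega)]
      apply Finset.prod_ne_zero_iff.mpr
      intro i hi
      simp only [Finset.mem_range] at hi
      exact hc _ (by omega)
    · intro i j hji
      simp only [Matrix.of_apply]
      exact key n _ _ (by
        have := i.isLt; have := j.isLt
        have hji' : (j:ℕ) < i := hji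
        have e1 : n*(k+1) = n*((k+1)-1) + n := by
          rw [Nat.add_sub_cancel]; ring
        left; omega)
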